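/- For every integer q ≥ 2, each codeword (c, 0, c, c, …, c) of the Z_q-Simplex code S_3(q) obtained with α = 0 has Hamming weight q·wt(c), and among these codewords (c ranging over S_2(q)) there are: exactly 1 of weight 0; exactly d·φ(d) of weight q(q − q/d + 1), for each divisor d of q with d ≠ 1 and d ≠ q; exactly q·φ(q) + q − 1 of weight q^2; and exactly q(q − 1) − Σ_{d | q, d ≠ 1} d·φ(d) of weight q(q + 1), where φ is Euler's totient function. -/
import Mathlib


/-- Hamming weight of a word over `ZMod q`: the number of nonzero coordinates. -/
def wt {q : ℕ} (l : List (ZMod q)) : ℕ := l.countP (fun x => decide (x ≠ 0))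

/-- The word `(c, α, c + α·𝟏, c + 2α·𝟏, …, c + (q−1)α·𝟏)`, where `𝟏` is the
all-ones vector of the same length as `c`. -/
def simplexWord (q : ℕ) (α : ZMod q) (c : List (ZMod q)) : List (ZMod q) :=
  c ++ α :: (List.range (q - 1)).flatMap (fun i => c.map (fun x => x + ((i + 1 : ℕ) : ZMod q) * α))

/-- The `ZMod q`-Simplex code `S_k(q)` of dimension `k`, as a set of words (lists):
`S_1(q) = ZMod q` (as length-1 words) and
`S_k(q) = {(c, α, c + α·𝟏, …, c + (q−1)α·𝟏) : c ∈ S_{k-1}(q), α ∈ ZMod q}`. -/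
def simplex (q : ℕ) : ℕ → Set (List (ZMod q))
  | 0 => {[]}
  | k + 1 => {w | ∃ c ∈ simplex q k, ∃ α : ZMod q, w = simplexWord q α c}

/-- The word `(α, c + α·𝟏, c + 2α·𝟏, …, c + (q−1)α·𝟏)`. -/
def macWord (q : ℕ) (α : ZMod q) (c : List (ZMod q)) : List (ZMod q) :=
  α :: (List.range (q - 1)).flatMap (fun i => c.map (fun x => x + ((i + 1 : ℕ) : ZMod q) * α))

/-- The `ZMod q`-MacDonald code `M_{k,k-1}(q)`, as a set of words:
`M_{k,k-1}(q) = {(α, c + α·𝟏, …, c + (q−1)α·𝟏) : α ∈ ZMod q, c ∈ S_{k-1}(q)}`. -/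
def macdonald (q k : ℕ) : Set (List (ZMod q)) :=
  {w | ∃ α : ZMod q, ∃ c ∈ simplex q (k - 1), w = macWord q α c}

open Finset AddSubgroup

section SimplexHelpers

variable {q : ℕ}

lemma wt_cons (x : ZMod q) (l : List (ZMod q)) :
    wt (x :: l) = wt l + if x = 0 then 0 else 1 := by
  by_cases h : x = 0 <;> simp [wt, List.countP_cons, h]

lemma wt_flat (n : ℕ) (c : List (ZMod q)) :
    wt ((List.range n).flatMap (fun _ => c)) = n * wt c := by
  induction n with
  | zero => simp [wt]
  | succ n ih =>
    rw [List.range_succ, List.flatMap_append, wt, List.countP_append, ← wt, ← wt, ih]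
    simp [wt, Nat.succ_mul]

lemma wt_simplexWord_zero (hq : 1 ≤ q) (c : List (ZMod q)) :
    wt (simplexWord q 0 c) = q * wt c := by
  obtain ⟨q', rfl⟩ : ∃ q', q = q' + 1 := ⟨q - 1, by omega⟩
  have hmap : (fun i : ℕ => c.map (fun x => x + ((i + 1 : ℕ) : ZMod (q' + 1)) * 0)) = fun _ => c := by
    funext i; simp
  rw [simplexWord, hmap, wt, List.countP_append, ← wt, ← wt, wt_cons, wt_flat]
  simp [Nat.succ_mul, Nat.add_comm]

lemma simplexWord_singleton (α c₀ : ZMod q) :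
    simplexWord q α ([c₀]) =
      c₀ :: α :: (List.range (q - 1)).map (fun i => c₀ + ((i + 1 : ℕ) : ZMod q) * α) := by
  simp [simplexWord, ← List.map_eq_flatMap]

lemma wt_word2_count (hq : 1 ≤ q) (c₀ α : ZMod q) :
    wt (simplexWord q α ([c₀]))
      = #(Finset.filter (fun j : ℕ => c₀ + (j : ZMod q) * α ≠ 0) (Finset.range q))
        + (if α = 0 then 0 else 1) := by
  obtain ⟨q', rfl⟩ : ∃ q', q = q' + 1 := ⟨q - 1, by omega⟩
  rw [← Nat.count_eq_card_filter_range, simplexWord_singleton, wt_cons, wt_cons]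
  have hcnt : Nat.count (fun j : ℕ => c₀ + (j : ZMod (q' + 1)) * α ≠ 0) (q' + 1)
      = (List.range (q' + 1)).countP
          (fun j : ℕ => decide (c₀ + (j : ZMod (q' + 1)) * α ≠ 0)) := rfl
  rw [hcnt, List.range_succ_eq_map, List.countP_cons, List.countP_map]
  simp only [Nat.add_sub_cancel, wt, List.countP_map]
  by_cases hc : c₀ = 0 <;>
    simp [hc, Function.comp_def, Nat.succ_eq_add_one] <;> omega

lemma card_filter_range_cast [NeZero q] (P : ZMod q → Prop) [DecidablePred P] :
    #(Finset.filter (fun j : ℕ => P (j : ZMod q)) (Finset.range q))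
      = #(Finset.filter P Finset.univ) := by
  refine Finset.card_bij' (fun j _ => (j : ZMod q)) (fun x _ => x.val) ?_ ?_ ?_ ?_
  · intro a ha
    simp only [Finset.mem_filter] at ha ⊢
    exact ⟨Finset.mem_univ _, ha.2⟩
  · intro x hx
    simp only [Finset.mem_filter, Finset.mem_range] at hx ⊢
    refine ⟨ZMod.val_lt x, ?_⟩
    rw [ZMod.natCast_val, ZMod.cast_id]
    exact hx.2
  · intro a ha
    simp only [Finset.mem_filter, Finset.mem_range] at ha
    exact ZMod.val_natCast_of_lt ha.1
  · intro x hx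
    show ((x.val : ℕ) : ZMod q) = x
    rw [ZMod.natCast_val, ZMod.cast_id]

lemma mul_mem_zmultiples [NeZero q] (j α : ZMod q) : j * α ∈ zmultiples α := by
  refine mem_zmultiples_iff.2 ⟨(j.val : ℤ), ?_⟩
  rw [zsmul_eq_mul]
  push_cast
  rw [ZMod.natCast_val, ZMod.cast_id]

lemma card_mul_eq_zero [NeZero q] (α : ZMod q) :
    #(Finset.filter (fun j : ZMod q => j * α = 0) Finset.univ) * addOrderOf α = q := by
  classical
  set f := AddMonoidHom.mulRight α with hf
  have hrange : f.range = zmultiples α := by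
    ext x
    simp only [AddMonoidHom.mem_range, hf, AddMonoidHom.mulRight_apply]
    constructor
    · rintro ⟨j, rfl⟩; exact mul_mem_zmultiples j α
    · rintro hx
      obtain ⟨n, rfl⟩ := mem_zmultiples_iff.1 hx
      exact ⟨(n : ZMod q), (zsmul_eq_mul α n).symm⟩
  have h1 : Nat.card (ZMod q) = Nat.card (ZMod q ⧸ f.ker) * Nat.card f.ker :=
    AddSubgroup.card_eq_card_quotient_mul_card_addSubgroup f.ker
  have h2 : Nat.card (ZMod q ⧸ f.ker) = addOrderOf α := by
    rw [Nat.card_congr (QuotientAddGroup.quotientKerEquivRange f).toEquiv, hrange,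
      Nat.card_zmultiples]
  have h3 : Nat.card f.ker = #(Finset.filter (fun j : ZMod q => j * α = 0) Finset.univ) := by
    rw [Nat.card_eq_fintype_card]
    rw [show (Fintype.card f.ker) = Fintype.card {x : ZMod q // x ∈ f.ker} from rfl]
    rw [Fintype.card_subtype]
    congr 1
    apply Finset.filter_congr
    intro x _
    simp [hf, AddMonoidHom.mem_ker]
  rw [h2, h3, Nat.card_zmod] at h1
  rw [mul_comm]
  exact h1.symm

lemma card_sols [NeZero q] (c₀ α : ZMod q) [Decidable (c₀ ∈ zmultiples α)] :
    #(Finset.filter (fun j : ZMod q => c₀ + j * α = 0) Finset.univ)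
      = if c₀ ∈ zmultiples α then q / addOrderOf α else 0 := by
  split_ifs with h
  · obtain ⟨n, hn⟩ := mem_zmultiples_iff.1 (neg_mem h)
    rw [zsmul_eq_mul] at hn
    set j₀ := ((n : ℤ) : ZMod q) with hj₀def
    have hkey : #(Finset.filter (fun j : ZMod q => c₀ + j * α = 0) Finset.univ)
        = #(Finset.filter (fun j : ZMod q => j * α = 0) Finset.univ) := by
      apply Finset.card_bij' (i := fun j _ => j - j₀) (j := fun t _ => t + j₀)
      · intro a ha
        simp only [Finset.mem_filter, Finset.mem_univ, true_and] at ha ⊢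
        have : a * α = -c₀ := by linear_combination ha
        rw [sub_mul, this, hn]
        ring
      · intro t ht
        simp only [Finset.mem_filter, Finset.mem_univ, true_and] at ht ⊢
        rw [add_mul, ht, hn]
        ring
      · intro a _; ring
      · intro t _; ring
    have hmul := card_mul_eq_zero α
    have hpos : 0 < addOrderOf α := addOrderOf_pos α
    have hdiv : q / addOrderOf α
        = #(Finset.filter (fun j : ZMod q => j * α = 0) Finset.univ) :=
      Nat.div_eq_of_eq_mul_left hpos hmul.symm
    rw [hkey, hdiv]
  · rw [Finset.card_eq_zero, Finset.filter_eq_empty_iff]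
    intro j _ hj
    apply h
    have : c₀ = (-j) * α := by linear_combination hj
    rw [this]
    exact mul_mem_zmultiples _ _

open scoped Classical in
lemma wt_word2 [NeZero q] (hq : 1 ≤ q) (c₀ α : ZMod q) :
    wt (simplexWord q α ([c₀]))
      = q - (if c₀ ∈ zmultiples α then q / addOrderOf α else 0)
        + (if α = 0 then 0 else 1) := by
  rw [wt_word2_count hq c₀ α, card_filter_range_cast (fun x : ZMod q => c₀ + x * α ≠ 0)]
  congr 1
  have hsplit := Finset.card_filter_add_card_filter_not
    (s := (Finset.univ : Finset (ZMod q))) (p := fun j : ZMod q => c₀ + j * α = 0)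
  have hcard : #(Finset.univ : Finset (ZMod q)) = q := by
    rw [Finset.card_univ, ZMod.card]
  rw [card_sols c₀ α, hcard] at hsplit
  have he : #(Finset.filter (fun x : ZMod q => c₀ + x * α ≠ 0) Finset.univ)
      = #(Finset.filter (fun x : ZMod q => ¬(c₀ + x * α = 0)) Finset.univ) := by
    simp only [ne_eq]
  rw [he]
  omega

open scoped Classical in
lemma card_zmult [NeZero q] (α : ZMod q) :
    #(Finset.filter (fun c₀ : ZMod q => c₀ ∈ zmultiples α) Finset.univ) = addOrderOf α := by
  rw [← Fintype.card_subtype, ← Nat.card_eq_fintype_card]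
  exact Nat.card_zmultiples α

lemma simplexWord_nil (α : ZMod q) : simplexWord q α ([]) = [α] := by
  simp [simplexWord]

lemma card_filter_prod {A B : Type*} [Fintype A] [Fintype B] (R : A → B → Prop)
    [∀ a b, Decidable (R a b)] :
    #(Finset.filter (fun p : A × B => R p.1 p.2) Finset.univ)
      = ∑ b : B, #(Finset.filter (fun a : A => R a b) Finset.univ) := by
  rw [Finset.card_filter, Fintype.sum_prod_type_right]
  exact Finset.sum_congr rfl fun b _ => (Finset.card_filter _ _).symm

section counts
variable [NeZero q]

lemma addOrderOf_dvd_q (α : ZMod q) : addOrderOf α ∣ q := by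
  have := addOrderOf_dvd_card (x := α)
  rwa [ZMod.card] at this

lemma div_div_q (hq : 2 ≤ q) {e : ℕ} (he : e ∣ q) : q / (q / e) = e :=
  Nat.div_div_self he (by omega)

lemma div_pos_q (hq : 2 ≤ q) {e : ℕ} (he : e ∣ q) (he0 : e ≠ 0) : 1 ≤ q / e :=
  Nat.div_pos (Nat.le_of_dvd (by omega) he) (by omega)

lemma div_eq_div_q (hq : 2 ≤ q) {e d : ℕ} (he : e ∣ q) (hd : d ∣ q)
    (h : q / e = q / d) : e = d := by
  rw [← div_div_q hq he, h, div_div_q hq hd]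

lemma div_eq_one_iff_q (hq : 2 ≤ q) {e : ℕ} (he : e ∣ q) (he0 : e ≠ 0) :
    q / e = 1 ↔ e = q := by
  constructor
  · intro h
    rw [← div_div_q hq he, h, Nat.div_one]
  · rintro rfl
    exact Nat.div_self (by omega)

lemma div_ne_q (hq : 2 ≤ q) {e : ℕ} (he : e ∣ q) (he1 : e ≠ 1) : q / e ≠ q := by
  intro h
  have := div_div_q hq he
  rw [h, Nat.div_self (show 0 < q by omega)] at this
  exact he1 this.symm

open scoped Classical in
lemma wt_sw2_zero (hq : 2 ≤ q) (c₀ : ZMod q) :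
    wt (simplexWord q (0 : ZMod q) ([c₀])) = if c₀ = 0 then 0 else q := by
  rw [wt_word2 (by omega) c₀ 0]
  have h0 : zmultiples (0 : ZMod q) = ⊥ := by simp
  have : addOrderOf (0 : ZMod q) = 1 := addOrderOf_zero
  by_cases hc : c₀ = 0 <;> simp [hc, h0, this]

open scoped Classical in
lemma wt_sw2_ne (hq : 2 ≤ q) (c₀ α : ZMod q) (hα : α ≠ 0) :
    wt (simplexWord q α ([c₀]))
      = if c₀ ∈ zmultiples α then q - q / addOrderOf α + 1 else q + 1 := by
  rw [wt_word2 (by omega) c₀ α]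
  have hqq : q / addOrderOf α ≤ q := Nat.div_le_self _ _
  by_cases hm : c₀ ∈ zmultiples α <;> simp [hm, hα] <;> omega

end counts

section counts2
variable [NeZero q]

open scoped Classical in
lemma countA (hq : 2 ≤ q) :
    #(Finset.filter (fun p : ZMod q × ZMod q => q * wt (simplexWord q p.2 ([p.1])) = 0)
        Finset.univ) = 1 := by
  have hset : Finset.filter (fun p : ZMod q × ZMod q => q * wt (simplexWord q p.2 ([p.1])) = 0)
      Finset.univ = {((0 : ZMod q), (0 : ZMod q))} := by
    ext ⟨c₀, α⟩
    simp only [Finset.mem_filter, Finset.mem_univ, true_and, Finset.mem_singleton,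
      Prod.mk.injEq]
    by_cases hα : α = 0
    · subst hα
      rw [wt_sw2_zero hq]
      by_cases hc : c₀ = 0 <;> simp [hc] <;> omega
    · rw [wt_sw2_ne hq c₀ α hα]
      have h1 : 1 ≤ q / addOrderOf α :=
        div_pos_q hq (addOrderOf_dvd_q α) (addOrderOf_pos α).ne'
      have h2 : q / addOrderOf α ≤ q := Nat.div_le_self _ _
      simp only [hα, and_false, iff_false]
      by_cases hm : c₀ ∈ zmultiples α <;> simp [hm] <;> omega
  rw [hset, Finset.card_singleton]

open scoped Classical in
lemma countB (hq : 2 ≤ q) (d : ℕ) (hd : d ∣ q) (hd1 : d ≠ 1) (hdq : d ≠ q) :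
    #(Finset.filter
        (fun p : ZMod q × ZMod q => q * wt (simplexWord q p.2 ([p.1])) = q * (q - q / d + 1))
        Finset.univ) = d * Nat.totient d := by
  have hd0 : d ≠ 0 := by rintro rfl; simp at hd; omega
  have hqd1 : q / d ≠ 1 := fun h => hdq ((div_eq_one_iff_q hq hd hd0).1 h)
  have hqd2 : 1 ≤ q / d := div_pos_q hq hd hd0
  have hqdle : q / d ≤ q := Nat.div_le_self _ _
  have hqdq : q / d ≠ q := by
    intro h
    have := div_div_q hq hd
    rw [h, Nat.div_self (show 0 < q by omega)] at this
    omega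
  have hset : Finset.filter
      (fun p : ZMod q × ZMod q => q * wt (simplexWord q p.2 ([p.1])) = q * (q - q / d + 1))
      Finset.univ
      = Finset.filter
        (fun p : ZMod q × ZMod q => addOrderOf p.2 = d ∧ p.1 ∈ zmultiples p.2)
        Finset.univ := by
    apply Finset.filter_congr
    intro ⟨c₀, α⟩ _
    simp only
    by_cases hα : α = 0
    · subst hα
      rw [wt_sw2_zero hq]
      have h0 : addOrderOf (0 : ZMod q) = 1 := addOrderOf_zero
      rw [h0, mul_right_inj' (show (q : ℕ) ≠ 0 by omega)]
      by_cases hc : c₀ = 0 <;> simp [hc, hd1.symm] <;> omega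
    · rw [wt_sw2_ne hq c₀ α hα]
      have he : addOrderOf α ∣ q := addOrderOf_dvd_q α
      have he0 : addOrderOf α ≠ 0 := (addOrderOf_pos α).ne'
      have h1 : 1 ≤ q / addOrderOf α := div_pos_q hq he he0
      have h2 : q / addOrderOf α ≤ q := Nat.div_le_self _ _
      rw [mul_right_inj' (show (q : ℕ) ≠ 0 by omega)]
      by_cases hm : c₀ ∈ zmultiples α
      · simp only [hm, if_true, and_true]
        constructor
        · intro h
          exact div_eq_div_q hq he hd (by omega)
        · rintro rfl; rfl
      · simp only [hm, if_false, and_false, iff_false]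
        omega
  rw [hset, card_filter_prod (fun c₀ α => addOrderOf α = d ∧ c₀ ∈ zmultiples α)]
  have hval : ∀ α : ZMod q,
      #(Finset.filter (fun c₀ : ZMod q => addOrderOf α = d ∧ c₀ ∈ zmultiples α) Finset.univ)
        = if addOrderOf α = d then d else 0 := by
    intro α
    by_cases h : addOrderOf α = d
    · simp only [h, if_true, true_and]
      rw [card_zmult, h]
    · simp [h]
  rw [Finset.sum_congr rfl fun α _ => hval α, ← Finset.sum_filter, Finset.sum_const,
    smul_eq_mul, IsAddCyclic.card_addOrderOf_eq_totient (by rw [ZMod.card]; exact hd),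
    mul_comm]

open scoped Classical in
lemma countC (hq : 2 ≤ q) :
    #(Finset.filter
        (fun p : ZMod q × ZMod q => q * wt (simplexWord q p.2 ([p.1])) = q ^ 2)
        Finset.univ) = q * Nat.totient q + q - 1 := by
  have hset : Finset.filter
      (fun p : ZMod q × ZMod q => q * wt (simplexWord q p.2 ([p.1])) = q ^ 2)
      Finset.univ
      = Finset.filter
        (fun p : ZMod q × ZMod q =>
          (p.2 = 0 ∧ p.1 ≠ 0) ∨ (addOrderOf p.2 = q ∧ p.1 ∈ zmultiples p.2))
        Finset.univ := by
    apply Finset.filter_congr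
    intro ⟨c₀, α⟩ _
    simp only
    rw [pow_two, mul_right_inj' (show (q : ℕ) ≠ 0 by omega)]
    by_cases hα : α = 0
    · subst hα
      rw [wt_sw2_zero hq]
      have h0 : addOrderOf (0 : ZMod q) = 1 := addOrderOf_zero
      by_cases hc : c₀ = 0 <;> simp [hc, h0] <;> omega
    · rw [wt_sw2_ne hq c₀ α hα]
      have he : addOrderOf α ∣ q := addOrderOf_dvd_q α
      have he0 : addOrderOf α ≠ 0 := (addOrderOf_pos α).ne'
      have h1 : 1 ≤ q / addOrderOf α := div_pos_q hq he he0
      have h2 : q / addOrderOf α ≤ q := Nat.div_le_self _ _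
      have h3 : q / addOrderOf α = 1 ↔ addOrderOf α = q := div_eq_one_iff_q hq he he0
      by_cases hm : c₀ ∈ zmultiples α
      · simp only [hm, if_true, hα, false_and, false_or, and_true]
        omega
      · simp only [hm, if_false, hα, false_and, false_or, and_false, iff_false]
        omega
  rw [hset]
  refine (card_filter_prod
    (fun c₀ α : ZMod q => (α = 0 ∧ c₀ ≠ 0) ∨ (addOrderOf α = q ∧ c₀ ∈ zmultiples α))).trans ?_
  have hval : ∀ α : ZMod q,
      #(Finset.filter
        (fun c₀ : ZMod q => (α = 0 ∧ c₀ ≠ 0) ∨ (addOrderOf α = q ∧ c₀ ∈ zmultiples α))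
        Finset.univ)
      = (if α = 0 then q - 1 else 0) + (if addOrderOf α = q then q else 0) := by
    intro α
    by_cases hα : α = 0
    · subst hα
      have h0 : addOrderOf (0 : ZMod q) = 1 := addOrderOf_zero
      have hq1 : (1 : ℕ) ≠ q := by omega
      simp only [h0, hq1, if_false, if_true, add_zero, true_and, false_and, or_false]
      rw [Finset.filter_ne', Finset.card_erase_of_mem (Finset.mem_univ _),
        Finset.card_univ, ZMod.card]
    · by_cases hord : addOrderOf α = q
      · simp only [hα, false_and, false_or, hord, if_true, if_false, zero_add, true_and]
        rw [card_zmult, hord]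
      · simp [hα, hord]
  rw [Finset.sum_congr rfl fun α _ => hval α, Finset.sum_add_distrib]
  have hs1 : (∑ α : ZMod q, if α = 0 then q - 1 else 0) = q - 1 := by
    rw [Finset.sum_ite_eq' Finset.univ (0 : ZMod q) (fun _ => q - 1)]
    simp
  have hs2 : (∑ α : ZMod q, if addOrderOf α = q then q else 0) = Nat.totient q * q := by
    rw [← Finset.sum_filter, Finset.sum_const, smul_eq_mul,
      IsAddCyclic.card_addOrderOf_eq_totient (by rw [ZMod.card])]
  rw [hs1, hs2, mul_comm]
  omega

open scoped Classical in
lemma countD (hq : 2 ≤ q) :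
    #(Finset.filter
        (fun p : ZMod q × ZMod q => q * wt (simplexWord q p.2 ([p.1])) = q * (q + 1))
        Finset.univ)
      = q * (q - 1) - ∑ d ∈ q.divisors.filter (fun d => d ≠ 1), d * Nat.totient d := by
  have hset : Finset.filter
      (fun p : ZMod q × ZMod q => q * wt (simplexWord q p.2 ([p.1])) = q * (q + 1))
      Finset.univ
      = Finset.filter
        (fun p : ZMod q × ZMod q => p.2 ≠ 0 ∧ p.1 ∉ zmultiples p.2)
        Finset.univ := by
    apply Finset.filter_congr
    intro ⟨c₀, α⟩ _
    simp only
    rw [mul_right_inj' (show (q : ℕ) ≠ 0 by omega)]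
    by_cases hα : α = 0
    · subst hα
      rw [wt_sw2_zero hq]
      by_cases hc : c₀ = 0 <;> simp [hc] <;> omega
    · rw [wt_sw2_ne hq c₀ α hα]
      have he : addOrderOf α ∣ q := addOrderOf_dvd_q α
      have he0 : addOrderOf α ≠ 0 := (addOrderOf_pos α).ne'
      have h1 : 1 ≤ q / addOrderOf α := div_pos_q hq he he0
      have h2 : q / addOrderOf α ≤ q := Nat.div_le_self _ _
      by_cases hm : c₀ ∈ zmultiples α <;> simp [hm, hα] <;> omega
  rw [hset]
  refine (card_filter_prod (fun c₀ α : ZMod q => α ≠ 0 ∧ c₀ ∉ zmultiples α)).trans ?_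
  have hval : ∀ α : ZMod q,
      #(Finset.filter (fun c₀ : ZMod q => α ≠ 0 ∧ c₀ ∉ zmultiples α) Finset.univ)
        = if α = 0 then 0 else q - addOrderOf α := by
    intro α
    by_cases hα : α = 0
    · simp [hα]
    · simp only [hα, if_false, ne_eq, not_false_eq_true, true_and]
      have hsplit := Finset.card_filter_add_card_filter_not
        (s := (Finset.univ : Finset (ZMod q))) (p := fun c₀ : ZMod q => c₀ ∈ zmultiples α)
      rw [card_zmult, Finset.card_univ, ZMod.card] at hsplit
      omega
  rw [Finset.sum_congr rfl fun α _ => hval α]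
  have hstep : (∑ α : ZMod q, if α = 0 then 0 else q - addOrderOf α)
      = ∑ α ∈ Finset.filter (fun α : ZMod q => α ≠ 0) Finset.univ, (q - addOrderOf α) := by
    rw [Finset.sum_filter]
    apply Finset.sum_congr rfl
    intro α _
    by_cases hα : α = 0 <;> simp [hα]
  rw [hstep, Finset.sum_tsub_distrib _ (fun α _ => Nat.le_of_dvd (by omega) (addOrderOf_dvd_q α))]
  have hconst : (∑ _α ∈ Finset.filter (fun α : ZMod q => α ≠ 0) Finset.univ, q) = q * (q - 1) := by
    rw [Finset.sum_const, smul_eq_mul, Finset.filter_ne', Finset.card_erase_of_mem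
      (Finset.mem_univ _), Finset.card_univ, ZMod.card, mul_comm]
  have hsum : (∑ α ∈ Finset.filter (fun α : ZMod q => α ≠ 0) Finset.univ, addOrderOf α)
      = ∑ d ∈ q.divisors.filter (fun d => d ≠ 1), d * Nat.totient d := by
    rw [← Finset.sum_fiberwise_of_maps_to (g := fun α : ZMod q => addOrderOf α)
      (t := q.divisors.filter (fun d => d ≠ 1)) ?_ (fun α => addOrderOf α)]
    · apply Finset.sum_congr rfl
      intro d hd
      rw [Finset.mem_filter, Nat.mem_divisors] at hd
      obtain ⟨⟨hdq, hq0⟩, hd1⟩ := hd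
      have hfib : Finset.filter (fun α : ZMod q => addOrderOf α = d)
          (Finset.filter (fun α : ZMod q => α ≠ 0) Finset.univ)
          = Finset.filter (fun α : ZMod q => addOrderOf α = d) Finset.univ := by
        rw [Finset.filter_filter]
        apply Finset.filter_congr
        intro α _
        simp only [ne_eq, and_iff_right_iff_imp]
        intro hord hα0
        rw [hα0, addOrderOf_zero] at hord
        exact hd1 hord.symm
      rw [Finset.sum_congr hfib (fun α hα => (Finset.mem_filter.1 hα).2),
        Finset.sum_const, smul_eq_mul,
        IsAddCyclic.card_addOrderOf_eq_totient (by rw [ZMod.card]; exact hdq), mul_comm]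
    · intro α hα
      rw [Finset.mem_filter] at hα
      rw [Finset.mem_filter, Nat.mem_divisors]
      refine ⟨⟨addOrderOf_dvd_q α, by omega⟩, ?_⟩
      intro h1
      exact hα.2 (AddMonoid.addOrderOf_eq_one_iff.1 h1)
  rw [hconst, hsum]

end counts2

lemma simplex_two_eq_range :
    simplex q 2 = Set.range (fun p : ZMod q × ZMod q => simplexWord q p.2 ([p.1])) := by
  ext w
  constructor
  · rintro ⟨c, hc, α, rfl⟩
    obtain ⟨c', hc', β, rfl⟩ := hc
    have : c' = [] := hc'
    subst this
    rw [simplexWord_nil]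
    exact ⟨(β, α), rfl⟩
  · rintro ⟨⟨c₀, α⟩, rfl⟩
    exact ⟨[c₀], ⟨[], rfl, c₀, (simplexWord_nil c₀).symm⟩, α, rfl⟩

lemma sw2_injective [NeZero q] :
    Function.Injective (fun p : ZMod q × ZMod q => simplexWord q p.2 ([p.1])) := by
  intro ⟨c₀, α⟩ ⟨c₀', α'⟩ h
  simp only [simplexWord_singleton, List.cons.injEq] at h
  exact Prod.ext h.1 h.2.1

open scoped Classical in
lemma ncard_eq_card_filter (hq : 2 ≤ q) [NeZero q] (w : ℕ) :
    ({c ∈ simplex q 2 | wt (simplexWord q 0 c) = w}).ncard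
      = #(Finset.filter
          (fun p : ZMod q × ZMod q => q * wt (simplexWord q p.2 ([p.1])) = w)
          Finset.univ) := by
  set F := fun p : ZMod q × ZMod q => simplexWord q p.2 ([p.1]) with hF
  have hsep : {c ∈ simplex q 2 | wt (simplexWord q 0 c) = w}
      = F '' {p : ZMod q × ZMod q | q * wt (F p) = w} := by
    rw [simplex_two_eq_range]
    ext c
    constructor
    · rintro ⟨⟨p, rfl⟩, hw⟩
      refine ⟨p, ?_, rfl⟩
      rw [Set.mem_setOf_eq, ← wt_simplexWord_zero (by omega : 1 ≤ q) (F p)]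
      exact hw
    · rintro ⟨p, hp, rfl⟩
      exact ⟨⟨p, rfl⟩, by rw [wt_simplexWord_zero (by omega : 1 ≤ q) (F p)]; exact hp⟩
  rw [hsep, Set.ncard_image_of_injective _ sw2_injective]
  rw [show {p : ZMod q × ZMod q | q * wt (F p) = w}
      = ↑(Finset.filter (fun p : ZMod q × ZMod q => q * wt (F p) = w) Finset.univ) by
    ext p; simp]
  exact Set.ncard_coe_finset _

end SimplexHelpers

/-- Each codeword `(c, 0, c, …, c)` of `S_3(q)` (with `α = 0`) has Hamming weight
`q·wt(c)`, and among these codewords, as `c` ranges over `S_2(q)`: exactly 1 has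
weight 0, exactly `d·φ(d)` have weight `q(q − q/d + 1)` for each divisor `d` of `q`
with `d ≠ 1, d ≠ q`, exactly `q·φ(q) + q − 1` have weight `q²`, and exactly
`q(q − 1) − Σ_{d ∣ q, d ≠ 1} d·φ(d)` have weight `q(q + 1)`. -/
theorem simplex_three_alpha_zero_distribution (q : ℕ) (hq : 2 ≤ q) :
    (∀ c ∈ simplex q 2, wt (simplexWord q 0 c) = q * wt c) ∧
    ({c ∈ simplex q 2 | wt (simplexWord q 0 c) = 0}).ncard = 1 ∧
    (∀ d : ℕ, d ∣ q → d ≠ 1 → d ≠ q →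
      ({c ∈ simplex q 2 | wt (simplexWord q 0 c) = q * (q - q / d + 1)}).ncard
        = d * Nat.totient d) ∧
    ({c ∈ simplex q 2 | wt (simplexWord q 0 c) = q ^ 2}).ncard
      = q * Nat.totient q + q - 1 ∧
    ({c ∈ simplex q 2 | wt (simplexWord q 0 c) = q * (q + 1)}).ncard
      = q * (q - 1) - ∑ d ∈ q.divisors.filter (fun d => d ≠ 1), d * Nat.totient d := by
  haveI : NeZero q := ⟨by omega⟩
  refine ⟨fun c _ => wt_simplexWord_zero (by omega) c, ?_, ?_, ?_, ?_⟩
  · rw [ncard_eq_card_filter hq]; exact countA hq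
  · intro d hd hd1 hdq
    rw [ncard_eq_card_filter hq]; exact countB hq d hd hd1 hdq
  · rw [ncard_eq_card_filter hq]; exact countC hq
  · rw [ncard_eq_card_filter hq]; exact countD hq
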